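/- Let V be a real inner product space, K ∈ V with K ≠ 0, ρ > 0, μ > 0, and define f(H) = ρ/‖H‖ + (μ/2)‖H − K‖² for H ≠ 0. If H* ≠ 0 satisfies f(H*) ≤ f(H) for every H ≠ 0, then H* = t·K for some real t > 0. -/

import Mathlib

open RealInnerProductSpace


/-- Any global minimizer over `V \ {0}` of `H ↦ ρ/‖H‖ + (μ/2)‖H − K‖²` (with `K ≠ 0`,
`ρ > 0`, `μ > 0`) lies on the open ray spanned by `K`. -/
theorem h_subproblem_minimizer_on_ray {V : Type*} [NormedAddCommGroup V]
    [InnerProductSpace ℝ V]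
    (K : V) (hK : K ≠ 0) (ρ μ : ℝ) (hρ : 0 < ρ) (hμ : 0 < μ)
    (Hstar : V) (hHstar : Hstar ≠ 0)
    (hmin : ∀ H : V, H ≠ 0 →
      ρ / ‖Hstar‖ + μ / 2 * ‖Hstar - K‖ ^ 2 ≤ ρ / ‖H‖ + μ / 2 * ‖H - K‖ ^ 2) :
    ∃ t : ℝ, 0 < t ∧ Hstar = t • K := by
  have hKn : (0:ℝ) < ‖K‖ := norm_pos_iff.mpr hK
  have hHn : (0:ℝ) < ‖Hstar‖ := norm_pos_iff.mpr hHstar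
  set a := ‖Hstar‖ with ha
  set c : ℝ := a / ‖K‖ with hc
  have hcpos : 0 < c := div_pos hHn hKn
  set H0 : V := c • K with hH0
  have hH0ne : H0 ≠ 0 := smul_ne_zero (ne_of_gt hcpos) hK
  have hH0norm : ‖H0‖ = a := by
    rw [hH0, norm_smul, Real.norm_eq_abs, abs_of_pos hcpos, hc,
      div_mul_cancel₀ _ (ne_of_gt hKn)]
  have key := hmin H0 hH0ne
  rw [hH0norm] at key
  have hsq : ‖Hstar - K‖ ^ 2 ≤ ‖H0 - K‖ ^ 2 := by
    have h2 : 0 < μ / 2 := by linarith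
    nlinarith [key]
  have hexp : ∀ x : V, ‖x - K‖ ^ 2 = ‖x‖ ^ 2 - 2 * (inner ℝ x K : ℝ) + ‖K‖ ^ 2 := by
    intro x
    rw [← real_inner_self_eq_norm_sq, ← real_inner_self_eq_norm_sq,
      ← real_inner_self_eq_norm_sq, inner_sub_sub_self, real_inner_comm K x]
    ring
  have hinner : a * ‖K‖ ≤ (inner ℝ Hstar K : ℝ) := by
    have h1 := hexp Hstar
    have h2 := hexp H0
    have hiH0 : (inner ℝ H0 K : ℝ) = c * (‖K‖ * ‖K‖) := by
      rw [hH0, real_inner_smul_left, real_inner_self_eq_norm_mul_norm]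
    rw [h1, h2, hH0norm, hiH0] at hsq
    have : c * (‖K‖ * ‖K‖) = a * ‖K‖ := by
      rw [hc]; field_simp
    nlinarith [hsq]
  have hcs : (inner ℝ Hstar K : ℝ) ≤ a * ‖K‖ := real_inner_le_norm Hstar K
  have heq : (inner ℝ Hstar K : ℝ) = ‖Hstar‖ * ‖K‖ := le_antisymm hcs hinner
  have := (inner_eq_norm_mul_iff_real (x := Hstar) (y := K)).mp heq
  refine ⟨c, hcpos, ?_⟩
  have : Hstar = (‖K‖)⁻¹ • (‖Hstar‖ • K) := by
    rw [← this, smul_smul, inv_mul_cancel₀ (ne_of_gt hKn), one_smul]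
  rw [this, smul_smul, hc, ha]
  ring_nf
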